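/- Let A ≥ 1, A' and k be integers, let κ ∈ {0,1}, and let m ≥ 1 be an integer. Then there exist formal Laurent series 𝓜₀, 𝓜₁, …, 𝓜_{m−1} over ℚ, each with support contained in {A·j : j a nonnegative integer}, such that f((−1)^κ q^{k+A'}, (−1)^κ q^{−k+(A−A')})^m = Σ_{s=0}^{m−1} (−1)^{κ·s} · q^{(k+A')·s} · f((−1)^{κ·m} q^{km+As+A'm}, (−1)^{κ·m} q^{−km−As+(A−A')m}) · 𝓜_s, and moreover 𝓜_s = 𝓜_{m−s} for every integer s with 1 ≤ s ≤ m−1. -/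

import Mathlib

/-!
Common setup: Ramanujan theta series as formal Laurent series over `ℚ`
(`LaurentSeries ℚ = HahnSeries ℤ ℚ`), and the huffing operator `H_M`.
-/

noncomputable section

open scoped Classical

namespace ThetaVanish

/-- A subset of `ℤ` that is bounded below is partially well-ordered. -/
theorem isPWO_of_subset_Ici {a : ℤ} {s : Set ℤ} (h : s ⊆ Set.Ici a) : s.IsPWO := by
  have hWF : s.IsWF := by
    rw [Set.isWF_iff_no_descending_seq]
    intro f hf hmem
    have key : ∀ n : ℕ, f n + n ≤ f 0 := by
      intro n
      induction n with
      | zero => simp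
      | succ k ih =>
        have h2 : f (k + 1) < f k := hf (Nat.lt_succ_self k)
        push_cast
        push_cast at ih
        omega
    have h1 := key (f 0 - a + 1).toNat
    have h2 : a ≤ f ((f 0 - a + 1).toNat) := h (hmem _)
    have h3 : a ≤ f 0 := h (hmem 0)
    omega
  exact hWF.isPWO

/-- The coefficient of `q^N` in Ramanujan's theta series `f(ε q^r, ε q^s)`:
the (finite, when `r + s > 0`) sum of `ε^n` over all integers `n` with
`r·n(n+1)/2 + s·n(n-1)/2 = N`. -/
def thetaCoeff (ε r s : ℤ) : ℤ → ℚ := fun N =>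
  ∑ᶠ n : ℤ, if r * (n * (n + 1) / 2) + s * (n * (n - 1) / 2) = N then (ε : ℚ) ^ n else 0

theorem thetaCoeff_support (ε r s : ℤ) (h : 0 < r + s) :
    Function.support (thetaCoeff ε r s) ⊆ Set.Ici (-(r - s) ^ 2) := by
  intro N hN
  simp only [Function.mem_support, ne_eq] at hN
  rw [Set.mem_Ici]
  by_contra hcon
  push_neg at hcon
  apply hN
  apply finsum_eq_zero_of_forall_eq_zero
  intro n
  rw [if_neg]
  intro hQ
  obtain ⟨c, hc⟩ := Int.even_mul_succ_self n
  obtain ⟨e, he⟩ := Int.even_mul_pred_self n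
  have hc' : n * (n + 1) = 2 * c := by omega
  have he' : n * (n - 1) = 2 * e := by omega
  have e1 : n * (n + 1) / 2 = c := by omega
  have e2 : n * (n - 1) / 2 = e := by omega
  rw [e1, e2] at hQ
  have key : 2 * N = (r + s) * n ^ 2 + (r - s) * n := by
    linear_combination -2 * hQ - r * hc' - s * he'
  nlinarith [sq_nonneg (2 * n + r - s), sq_nonneg (r - s),
    mul_nonneg (show (0:ℤ) ≤ r + s - 1 by omega) (sq_nonneg n)]

/-- Ramanujan's theta series `f(ε q^r, ε q^s)` (for a sign `ε ∈ {1, -1}` and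
`r + s > 0`), as a formal Laurent series over `ℚ`; junk value `0` if `r + s ≤ 0`. -/
def theta (ε r s : ℤ) : LaurentSeries ℚ :=
  if h : 0 < r + s then
    { coeff := thetaCoeff ε r s
      isPWO_support' := isPWO_of_subset_Ici (thetaCoeff_support ε r s h) }
  else 0

/-- The huffing operator `H_M`: keep only the coefficients whose index is a
multiple of `M`. -/
def huff (M : ℤ) (G : LaurentSeries ℚ) : LaurentSeries ℚ where
  coeff N := if M ∣ N then G.coeff N else 0
  isPWO_support' := by
    apply Set.IsPWO.mono G.isPWO_support
    intro N hN
    simp only [Function.mem_support, ne_eq] at hN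
    rw [HahnSeries.mem_support]
    by_cases hd : M ∣ N
    · rwa [if_pos hd] at hN
    · exact absurd (if_neg hd) hN



/-! ### Auxiliary machinery -/

def T (n : ℤ) : ℤ := n * (n - 1) / 2

lemma two_T (n : ℤ) : 2 * T n = n * (n - 1) := by
  obtain ⟨e, he⟩ := Int.even_mul_pred_self n
  unfold T; omega

lemma T_nonneg (n : ℤ) : 0 ≤ T n := by
  have h := two_T n
  have : 0 ≤ n * (n - 1) := by
    rcases le_or_gt n 0 with h1 | h1
    · nlinarith
    · nlinarith
  omega

lemma T_add (v t : ℤ) : T (v + t) = T v + T t + v * t := by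
  have h1 := two_T (v + t); have h2 := two_T v; have h3 := two_T t
  have : (v + t) * (v + t - 1) = v * (v - 1) + t * (t - 1) + 2 * (v * t) := by ring
  linarith

lemma T_one_sub (n : ℤ) : T (1 - n) = T n := by
  have h1 := two_T (1 - n); have h2 := two_T n
  have : (1 - n) * (1 - n - 1) = n * (n - 1) := by ring
  linarith

def Q (r s n : ℤ) : ℤ := r * (n * (n + 1) / 2) + s * (n * (n - 1) / 2)

lemma Q_eq (r s n : ℤ) : Q r s n = (r + s) * T n + r * n := by
  have h1 : n * (n + 1) / 2 = T n + n := by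
    have := two_T n
    obtain ⟨c, hc⟩ := Int.even_mul_succ_self n
    have h2 : n * (n + 1) = n * (n - 1) + 2 * n := by ring
    omega
  unfold Q
  rw [h1]
  show r * (T n + n) + s * T n = (r + s) * T n + r * n
  ring

lemma two_Q (r s n : ℤ) : 2 * Q r s n = (r + s) * n ^ 2 + (r - s) * n := by
  rw [Q_eq]
  linear_combination (r + s) * two_T n

lemma Q_lower (r s n : ℤ) (h : 0 < r + s) : -(r - s) ^ 2 ≤ Q r s n := by
  have h2 := two_Q r s n
  nlinarith [sq_nonneg (2 * n + r - s), sq_nonneg (r - s),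
    mul_nonneg (show (0:ℤ) ≤ r + s - 1 by omega) (sq_nonneg n)]

lemma Q_fiber_finite (r s N : ℤ) (h : 0 < r + s) : {n : ℤ | Q r s n = N}.Finite := by
  apply Set.Finite.subset (Set.finite_Icc (-(|N| + |r - s| + 2)) (|N| + |r - s| + 2))
  intro n hn
  simp only [Set.mem_setOf_eq] at hn
  have h2 := two_Q r s n
  rw [hn] at h2
  simp only [Set.mem_Icc]
  by_contra hc
  push_neg at hc
  have haN := abs_nonneg N; have hars := abs_nonneg (r - s)
  have h3 : N ≤ |N| := le_abs_self N
  have h4 : -|N| ≤ N := neg_abs_le N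
  have h5 : r - s ≤ |r - s| := le_abs_self _
  have h6 : -|r - s| ≤ r - s := neg_abs_le _
  rcases le_or_gt n (|N| + |r - s| + 2) with h7 | h7
  · have h8 : n < -(|N| + |r - s| + 2) := by
      by_contra hcc
      exact absurd (hc (by omega)) (by omega)
    nlinarith [sq_nonneg n, mul_pos (show (0:ℤ) < -n by omega) (show (0:ℤ) < -n - |r - s| by omega)]
  · nlinarith [mul_pos (show (0:ℤ) < n by omega) (show (0:ℤ) < n - |r - s| by omega)]



open HahnSeries HahnSeries.SummableFamily

def thetaFam (ε r s : ℤ) (h : 0 < r + s) : SummableFamily ℤ ℚ ℤ where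
  toFun n := HahnSeries.single (Q r s n) ((ε : ℚ) ^ n)
  isPWO_iUnion_support' := by
    apply isPWO_of_subset_Ici (a := -(r - s) ^ 2)
    refine Set.iUnion_subset fun n g hg => ?_
    have := HahnSeries.support_single_subset hg
    rw [Set.mem_singleton_iff] at this
    rw [this]
    exact Q_lower r s n h
  finite_co_support' g := by
    apply (Q_fiber_finite r s g h).subset
    intro n hn
    simp only [Set.mem_setOf_eq, ne_eq] at hn ⊢
    rw [HahnSeries.coeff_single] at hn
    by_contra hq
    exact hn (if_neg (fun hh => hq hh.symm))

theorem theta_eq_hsum (ε r s : ℤ) (h : 0 < r + s) :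
    theta ε r s = (thetaFam ε r s h).hsum := by
  rw [theta, dif_pos h]
  ext N
  rw [coeff_hsum]
  show thetaCoeff ε r s N = _
  unfold thetaCoeff
  refine finsum_congr fun n => ?_
  show _ = (HahnSeries.single (Q r s n) ((ε : ℚ) ^ n)).coeff N
  rw [HahnSeries.coeff_single]
  unfold Q
  simp only [eq_comm]
  congr 1

def powFam (ε r s : ℤ) (h : 0 < r + s) : (m : ℕ) → SummableFamily ℤ ℚ (Fin m → ℤ)
  | 0 => SummableFamily.Equiv (Equiv.ofUnique Unit (Fin 0 → ℤ)) (SummableFamily.single () 1)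
  | (m + 1) => SummableFamily.Equiv (Fin.consEquiv (fun _ : Fin (m + 1) => ℤ))
      (SummableFamily.smul (thetaFam ε r s h) (powFam ε r s h m))

theorem powFam_hsum (ε r s : ℤ) (h : 0 < r + s) (m : ℕ) :
    (powFam ε r s h m).hsum = (theta ε r s) ^ m := by
  induction m with
  | zero => rw [powFam, hsum_equiv, hsum_single, pow_zero]
  | succ m ih =>
    rw [powFam, hsum_equiv, smul_hsum, HahnSeries.of_symm_smul_of_eq_mul,
      ih, ← theta_eq_hsum ε r s h, pow_succ']

theorem powFam_apply (ε r s : ℤ) (hε : (ε : ℚ) ≠ 0) (h : 0 < r + s) (m : ℕ) (v : Fin m → ℤ) :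
    powFam ε r s h m v = HahnSeries.single (∑ i, Q r s (v i)) ((ε : ℚ) ^ (∑ i, v i)) := by
  induction m with
  | zero =>
    show (1 : HahnSeries ℤ ℚ) = _
    simp [HahnSeries.single_zero_one]
  | succ m ih =>
    show (SummableFamily.smul (thetaFam ε r s h) (powFam ε r s h m))
        ((Fin.consEquiv (fun _ : Fin (m + 1) => ℤ)).symm v) = _
    rw [smul_toFun, HahnSeries.of_symm_smul_of_eq_mul]
    show HahnSeries.single (Q r s (v 0)) ((ε : ℚ) ^ (v 0)) * powFam ε r s h m (Fin.tail v) = _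
    rw [ih, HahnSeries.single_mul_single, ← zpow_add₀ hε]
    rw [Fin.sum_univ_succ (fun i => Q r s (v i)), Fin.sum_univ_succ v]
    rfl

/-! ## The base families -/

def D (m : ℕ) (v : Fin m → ℤ) : ℤ := ∑ i, T (v i)

lemma D_nonneg (m : ℕ) (v : Fin m → ℤ) : 0 ≤ D m v :=
  Finset.sum_nonneg fun i _ => T_nonneg _

def Bset (m : ℕ) (c : ℤ) : Type := {v : Fin m → ℤ // ∑ i, v i = c}

def baseFam (m : ℕ) (A c : ℤ) (hA : 1 ≤ A) : SummableFamily ℤ ℚ (Bset m c) where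
  toFun v := HahnSeries.single (A * D m v.1) 1
  isPWO_iUnion_support' := by
    apply isPWO_of_subset_Ici (a := 0)
    refine Set.iUnion_subset fun v g hg => ?_
    have h2 := HahnSeries.support_single_subset hg
    rw [Set.mem_singleton_iff] at h2
    rw [h2]
    exact mul_nonneg (by omega) (D_nonneg m v.1)
  finite_co_support' g := by
    have hS : (Set.pi Set.univ (fun _ : Fin m =>
        Set.Icc (-(|g| + 2)) (|g| + 2)) : Set (Fin m → ℤ)).Finite :=
      Set.Finite.pi fun i => Set.finite_Icc _ _
    apply (hS.preimage (Set.injOn_of_injective (Subtype.val_injective))).subset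
    intro v hv
    have hv' : ((HahnSeries.single (A * D m v.1)) (1:ℚ)).coeff g ≠ 0 := hv
    rw [HahnSeries.coeff_single] at hv'
    have hg : g = A * D m v.1 := by
      by_contra hq
      exact hv' (if_neg hq)
    have hD : D m v.1 ≤ |g| := by
      have h1 := D_nonneg m v.1
      have h2 : (0:ℤ) ≤ g := by rw [hg]; exact mul_nonneg (by omega) h1
      have h3 : g ≤ |g| := le_abs_self g
      nlinarith
    intro i _
    have hTi : T (v.1 i) ≤ D m v.1 := by
      apply Finset.single_le_sum (f := fun j => T (v.1 j)) (fun j _ => T_nonneg _)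
        (Finset.mem_univ i)
    have h2T := two_T (v.1 i)
    have habs := abs_nonneg g
    constructor
    · by_contra hc
      push_neg at hc
      nlinarith [mul_pos (show (0:ℤ) < -(v.1 i) by omega) (show (0:ℤ) < 1 - v.1 i by omega)]
    · by_contra hc
      push_neg at hc
      nlinarith [mul_pos (show (0:ℤ) < v.1 i by omega) (show (0:ℤ) < v.1 i - 1 by omega)]

/-- The embedding `(t, v) ↦ v + t` of `ℤ × Bset m c` into tuples. -/
def embFn (m : ℕ) (hm : 1 ≤ m) (c : ℤ) : (ℤ × Bset m c) ↪ (Fin m → ℤ) where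
  toFun p := fun i => p.2.1 i + p.1
  inj' := by
    rintro ⟨t, v, hv⟩ ⟨t', v', hv'⟩ hh
    simp only [Prod.mk.injEq] at hh ⊢
    have h1 : ∑ i : Fin m, (v i + t) = ∑ i : Fin m, (v' i + t') := by
      exact Finset.sum_congr rfl fun i _ => congrFun hh i
    rw [Finset.sum_add_distrib, Finset.sum_add_distrib, hv, hv', Finset.sum_const,
      Finset.sum_const, Finset.card_univ, Fintype.card_fin, nsmul_eq_mul, nsmul_eq_mul] at h1
    have ht : t = t' := by
      have hm' : (1:ℤ) ≤ (m:ℤ) := by exact_mod_cast hm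
      have := mul_left_cancel₀ (show (m:ℤ) ≠ 0 by omega) (by omega : (m:ℤ) * t = (m:ℤ) * t')
      exact this
    refine Prod.ext ht ?_
    apply Subtype.ext
    funext i
    show v i = v' i
    have h2 : v i + t = v' i + t' := congrFun hh i
    omega

/-- The family collecting the residue class `c` of the `m`-th power. -/
def classFam (ε r A : ℤ) (m : ℕ) (c : ℤ) (hA : 1 ≤ A) (hm : 1 ≤ m) :
    SummableFamily ℤ ℚ (ℤ × Bset m c) :=
  HahnSeries.single (r * c) ((ε : ℚ) ^ c) •
    SummableFamily.smul
      (thetaFam (ε ^ m) (r * m + A * c) (A * m - (r * m + A * c))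
        (by have h1 : (1:ℤ) ≤ (m:ℤ) := Nat.one_le_cast.mpr hm; nlinarith))
      (baseFam m A c hA)

lemma classFam_apply (ε r A : ℤ) (hε : (ε : ℚ) ≠ 0) (m : ℕ) (c : ℤ) (hA : 1 ≤ A)
    (hm : 1 ≤ m) (t : ℤ) (v : Bset m c) :
    classFam ε r A m c hA hm (t, v) =
      HahnSeries.single (∑ i, Q r (A - r) (v.1 i + t)) ((ε : ℚ) ^ (∑ i, (v.1 i + t))) := by
  have hexp : ∑ i, Q r (A - r) (v.1 i + t) =
      r * c + Q (r * m + A * c) (A * m - (r * m + A * c)) t + A * D m v.1 := by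
    have h1 : ∀ i ∈ Finset.univ, Q r (A - r) (v.1 i + t) =
        A * T (v.1 i) + (A * t + r) * v.1 i + (A * T t + r * t) := by
      intro i _
      rw [Q_eq, T_add]
      ring
    rw [Finset.sum_congr rfl h1, Finset.sum_add_distrib, Finset.sum_add_distrib,
      ← Finset.mul_sum, ← Finset.mul_sum, v.2, Finset.sum_const, Finset.card_univ,
      Fintype.card_fin, nsmul_eq_mul, Q_eq]
    show _ = r * c + (((r * m + A * c) + (A * m - (r * m + A * c))) * T t
      + (r * m + A * c) * t) + A * D m v.1
    unfold D
    ring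
  have hcoe : (ε : ℚ) ^ c * (((ε ^ m : ℤ) : ℚ)) ^ t = (ε : ℚ) ^ (∑ i, (v.1 i + t)) := by
    rw [Finset.sum_add_distrib, v.2, Finset.sum_const, Finset.card_univ, Fintype.card_fin,
      nsmul_eq_mul]
    push_cast
    rw [← zpow_natCast (ε : ℚ) m, ← zpow_mul, ← zpow_add₀ hε]
  show (HahnSeries.single (r * c) ((ε : ℚ) ^ c) *
      (SummableFamily.smul _ (baseFam m A c hA)) (t, v)) = _
  rw [smul_toFun, HahnSeries.of_symm_smul_of_eq_mul]
  show HahnSeries.single (r * c) ((ε : ℚ) ^ c) *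
      (HahnSeries.single (Q (r * m + A * c) (A * m - (r * m + A * c)) t) (((ε ^ m : ℤ) : ℚ) ^ t) *
        HahnSeries.single (A * D m v.1) (1 : ℚ)) = _
  rw [HahnSeries.single_mul_single, HahnSeries.single_mul_single, mul_one, hcoe, ← add_assoc,
    ← hexp]

lemma sum_apply' {α : Type*} (t : Finset ℕ) (F : ℕ → SummableFamily ℤ ℚ α) (a : α) :
    (∑ c ∈ t, F c) a = ∑ c ∈ t, F c a := by
  induction t using Finset.cons_induction with
  | empty => simp [SummableFamily.zero_apply]
  | cons x t hx ih => rw [Finset.sum_cons, Finset.sum_cons, SummableFamily.add_apply, ih]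

theorem powFam_eq_sum (ε r A : ℤ) (hε : (ε : ℚ) ≠ 0) (hA : 1 ≤ A) (m : ℕ) (hm : 1 ≤ m)
    (h : 0 < r + (A - r)) :
    powFam ε r (A - r) h m =
      ∑ c ∈ Finset.range m,
        SummableFamily.embDomain (classFam ε r A m (c : ℤ) hA hm) (embFn m hm (c : ℤ)) := by
  apply SummableFamily.ext
  intro n
  rw [sum_apply']
  set S := ∑ i, n i with hS
  have hm0 : (m : ℤ) ≠ 0 := by exact_mod_cast Nat.one_le_iff_ne_zero.mp hm
  have hmpos : (0 : ℤ) < (m : ℤ) := by exact_mod_cast hm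
  have hmod_nonneg : 0 ≤ S % m := Int.emod_nonneg S hm0
  have hmod_lt : S % m < m := Int.emod_lt_of_pos S hmpos
  have hdm := Int.mul_ediv_add_emod S m
  set s0 : ℕ := (S % m).toNat with hs0
  have hs0' : (s0 : ℤ) = S % m := Int.toNat_of_nonneg hmod_nonneg
  have hs0m : s0 < m := by omega
  set t0 := S / m with ht0
  have hv0 : ∑ i, (n i - t0) = (s0 : ℤ) := by
    rw [Finset.sum_sub_distrib, Finset.sum_const, Finset.card_univ, Fintype.card_fin,
      nsmul_eq_mul, ← hS]
    omega
  rw [Finset.sum_eq_single s0]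
  · have himg : n = embFn m hm (s0 : ℤ) (t0, (⟨fun i => n i - t0, hv0⟩ : Bset m (s0 : ℤ))) := by
      funext i
      show n i = (n i - t0) + t0
      ring
    rw [himg, SummableFamily.embDomain_image]
    erw [classFam_apply ε r A hε m _ hA hm]
    rw [powFam_apply ε r (A - r) hε h m]
    rfl
  · intro c hc hne
    apply SummableFamily.embDomain_notin_range
    rintro ⟨⟨t, v, hv⟩, hveq⟩
    apply hne
    have hSc : S = (c : ℤ) + (m : ℤ) * t := by
      rw [hS]
      have : ∀ i, n i = v i + t := fun i => (congrFun hveq i).symm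
      calc ∑ i, n i = ∑ i : Fin m, (v i + t) := Finset.sum_congr rfl fun i _ => this i
        _ = (c : ℤ) + (m : ℤ) * t := by
          rw [Finset.sum_add_distrib, hv, Finset.sum_const, Finset.card_univ,
            Fintype.card_fin, nsmul_eq_mul]
    have hcm : (c : ℤ) < (m : ℤ) := by exact_mod_cast Finset.mem_range.mp hc
    have hmodc : S % (m : ℤ) = (c : ℤ) := by
      rw [hSc, Int.add_mul_emod_self_left]
      exact Int.emod_eq_of_lt (by positivity) hcm
    omega
  · intro hnot
    exact absurd (Finset.mem_range.mpr hs0m) hnot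

theorem classFam_hsum (ε r A : ℤ) (m : ℕ) (c : ℤ) (hA : 1 ≤ A) (hm : 1 ≤ m) :
    (classFam ε r A m c hA hm).hsum =
      HahnSeries.single (r * c) ((ε : ℚ) ^ c) *
        (theta (ε ^ m) (r * m + A * c) (A * m - (r * m + A * c)) *
          (baseFam m A c hA).hsum) := by
  unfold classFam
  rw [hsum_smul, smul_hsum, HahnSeries.of_symm_smul_of_eq_mul, ← theta_eq_hsum]

theorem baseFam_hsum_support (m : ℕ) (A c : ℤ) (hA : 1 ≤ A) :
    (baseFam m A c hA).hsum.support ⊆ {x : ℤ | ∃ j : ℕ, x = A * j} := by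
  intro x hx
  have h1 := SummableFamily.support_hsum_subset hx
  rw [Set.mem_iUnion] at h1
  obtain ⟨v, hv⟩ := h1
  have h2 := HahnSeries.support_single_subset hv
  rw [Set.mem_singleton_iff] at h2
  refine ⟨(D m v.1).toNat, ?_⟩
  rw [h2, Int.toNat_of_nonneg (D_nonneg m v.1)]

def symmEquiv (m : ℕ) (c : ℤ) : Bset m c ≃ Bset m ((m : ℤ) - c) where
  toFun v := ⟨fun i => 1 - v.1 i, by
    rw [Finset.sum_sub_distrib, v.2, Finset.sum_const, Finset.card_univ, Fintype.card_fin,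
      nsmul_eq_mul, mul_one]⟩
  invFun w := ⟨fun i => 1 - w.1 i, by
    rw [Finset.sum_sub_distrib, w.2, Finset.sum_const, Finset.card_univ, Fintype.card_fin,
      nsmul_eq_mul, mul_one]
    ring⟩
  left_inv v := by
    apply Subtype.ext
    funext i
    show 1 - (1 - v.1 i) = v.1 i
    ring
  right_inv w := by
    apply Subtype.ext
    funext i
    show 1 - (1 - w.1 i) = w.1 i
    ring

theorem baseFam_hsum_symm (m : ℕ) (A c : ℤ) (hA : 1 ≤ A) :
    (baseFam m A ((m : ℤ) - c) hA).hsum = (baseFam m A c hA).hsum := by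
  rw [← SummableFamily.hsum_equiv (symmEquiv m c) (baseFam m A c hA)]
  congr 1
  apply SummableFamily.ext
  intro w
  show HahnSeries.single (A * D m w.1) (1 : ℚ) =
    HahnSeries.single (A * D m ((symmEquiv m c).symm w).1) 1
  have hD : D m ((symmEquiv m c).symm w).1 = D m w.1 := by
    apply Finset.sum_congr rfl
    intro i _
    show T (1 - w.1 i) = T (w.1 i)
    exact T_one_sub _
  rw [hD]

lemma hsum_sum {α : Type*} (t : Finset ℕ) (F : ℕ → SummableFamily ℤ ℚ α) :
    (∑ c ∈ t, F c).hsum = ∑ c ∈ t, (F c).hsum := by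
  induction t using Finset.cons_induction with
  | empty =>
    ext g
    simp [SummableFamily.coeff_hsum, SummableFamily.zero_apply]
  | cons x t hx ih => rw [Finset.sum_cons, Finset.sum_cons, SummableFamily.hsum_add, ih]


/-- **Theorem (expansion of a theta power)**: for integers `A ≥ 1`, `A'`, `k`,
`κ ∈ {0,1}` and `m ≥ 1`, there are Laurent series `𝓜₀, …, 𝓜_{m-1}` supported on
`{A·j : j ∈ ℕ}` with
`f((-1)^κ q^{k+A'}, (-1)^κ q^{-k+(A-A')})^m
  = Σ_{s=0}^{m-1} (-1)^{κs} q^{(k+A')s}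
      f((-1)^{κm} q^{km+As+A'm}, (-1)^{κm} q^{-km-As+(A-A')m}) · 𝓜_s`,
and `𝓜_s = 𝓜_{m-s}` for `1 ≤ s ≤ m-1`. -/
theorem statement11 (A A' k : ℤ) (hA : 1 ≤ A) (κ : ℕ) (hκ : κ = 0 ∨ κ = 1)
    (m : ℕ) (hm : 1 ≤ m) :
    ∃ Ms : ℕ → LaurentSeries ℚ,
      (∀ s, s < m → (Ms s).support ⊆ {x : ℤ | ∃ j : ℕ, x = A * j}) ∧
      (theta ((-1) ^ κ) (k + A') (-k + (A - A')) ^ m =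
        ∑ s ∈ Finset.range m,
          (-1 : LaurentSeries ℚ) ^ (κ * s)
            * HahnSeries.single ((k + A') * (s : ℤ)) (1 : ℚ)
            * theta ((-1) ^ (κ * m)) (k * m + A * s + A' * m)
                (-(k * m) - A * s + (A - A') * m)
            * Ms s) ∧
      (∀ s : ℕ, 1 ≤ s → s ≤ m - 1 → Ms s = Ms (m - s)) := by
  set ε : ℤ := (-1) ^ κ with hε_def
  set r : ℤ := k + A' with hr_def
  have hε : (ε : ℚ) ≠ 0 := by
    rcases hκ with hk | hk <;> simp [hε_def, hk]
  have h : 0 < r + (A - r) := by omega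
  refine ⟨fun c => (baseFam m A (c : ℤ) hA).hsum, ?_, ?_, ?_⟩
  · intro c _
    exact baseFam_hsum_support m A (c : ℤ) hA
  · have harg : -k + (A - A') = A - r := by rw [hr_def]; ring
    rw [harg, ← powFam_hsum ε r (A - r) h m, powFam_eq_sum ε r A hε hA m hm h, hsum_sum]
    refine Finset.sum_congr rfl fun c hc => ?_
    rw [SummableFamily.hsum_embDomain, classFam_hsum]
    have e1 : ((-1 : ℤ)) ^ (κ * m) = ε ^ m := by rw [hε_def, pow_mul]
    have e2 : k * (m : ℤ) + A * (c : ℤ) + A' * (m : ℤ) = r * m + A * c := by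
      rw [hr_def]; ring
    have e3 : -(k * (m : ℤ)) - A * (c : ℤ) + (A - A') * (m : ℤ)
        = A * m - (r * m + A * c) := by
      rw [hr_def]; ring
    rw [e1, e2, e3]
    have e4 : (-1 : LaurentSeries ℚ) ^ (κ * c) * HahnSeries.single (r * (c : ℤ)) (1 : ℚ)
        = HahnSeries.single (r * (c : ℤ)) ((ε : ℚ) ^ (c : ℤ)) := by
      have hC : (-1 : LaurentSeries ℚ) = HahnSeries.C (-1 : ℚ) := by
        rw [map_neg, map_one]
      rw [hC, ← map_pow, HahnSeries.C_apply, HahnSeries.single_mul_single, zero_add]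
      congr 1
      rw [mul_one, hε_def]
      push_cast
      rw [zpow_natCast, ← pow_mul]
    rw [e4, mul_assoc]
  · intro s h1 h2
    have hsm : ((m - s : ℕ) : ℤ) = (m : ℤ) - (s : ℕ) := by
      have hs : s ≤ m := by omega
      push_cast [hs]
      ring
    show _ = (baseFam m A ((m - s : ℕ) : ℤ) hA).hsum
    rw [show ((m - s : ℕ) : ℤ) = (m : ℤ) - (s : ℕ) from hsm]
    exact (baseFam_hsum_symm m A (s : ℤ) hA).symm


end ThetaVanish
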